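/- arXiv:2204.08162 — 2 statements merged into one kernel-verified Lean document; each statement's English description precedes it below -/
import Mathlib

section
/- Let f : G → ℂ be a continuous positive definite function on a locally compact abelian group G with f(0) = 1. Then the set G₁ = {x ∈ G : |f(x)| = 1} is a closed subgroup of G, and the restriction of f to G₁ is a character (i.e., f(x+y) = f(x)f(y) for x, y ∈ G₁). -/
open Complex ComplexConjugate
open scoped ComplexOrder

theorem stmt3 {G : Type*} [AddCommGroup G] [TopologicalSpace G] [IsTopologicalAddGroup G]
    [LocallyCompactSpace G] [T2Space G]
    (f : G → ℂ) (hfcont : Continuous f) (hf0 : f 0 = 1)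
    (hfpd : ∀ (n : ℕ) (x : Fin n → G) (c : Fin n → ℂ),
      0 ≤ ∑ i, ∑ j, conj (c i) * c j * f (x i - x j)) :
    ∃ H : AddSubgroup G, (H : Set G) = {x : G | ‖f x‖ = 1} ∧
      IsClosed (H : Set G) ∧
      ∀ x ∈ H, ∀ y ∈ H, f (x + y) = f x * f y := by
  -- hermitian symmetry: f (-x) = conj (f x)
  have herm : ∀ x : G, f (-x) = conj (f x) := by
    intro x
    have h1 := hfpd 2 ![0, x] ![1, 1]
    have h2 := hfpd 2 ![0, x] ![1, I]
    simp [Fin.sum_univ_two, hf0, sub_zero, zero_sub] at h1 h2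
    rw [Complex.le_def] at h1 h2
    obtain ⟨-, h1⟩ := h1
    obtain ⟨-, h2⟩ := h2
    simp [Complex.ext_iff, Complex.add_im, Complex.add_re, Complex.mul_im,
      Complex.mul_re] at h1 h2 ⊢
    constructor <;> linarith
  -- key identity: if |f y| = 1 then f (y - x) = f y * conj (f x)
  have key : ∀ y x : G, f y * conj (f y) = 1 → f (y - x) = f y * conj (f x) := by
    intro y x hb
    set β : ℂ := f y * conj (f x) - f (y - x) with hβ
    have h := hfpd 3 ![0, x, y] ![conj (f y), -conj β, -1]
    simp only [Fin.sum_univ_three, Matrix.cons_val_zero, Matrix.cons_val_one, Matrix.head_cons,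
      Matrix.cons_val_two, Matrix.tail_cons] at h
    rw [show (0:G) - x = -x from zero_sub x, show (0:G) - y = -y from zero_sub y,
      show x - y = -(y - x) from (neg_sub y x).symm, herm x, herm y, herm (y - x),
      sub_self, sub_self, sub_self, sub_zero, sub_zero, hf0] at h
    have h2 : (0:ℂ) ≤ -(β * conj β) := by
      convert h using 1
      rw [hβ]
      simp only [map_neg, map_sub, map_mul, Complex.conj_conj, map_one]
      linear_combination hb
    rw [Complex.mul_conj, ← Complex.ofReal_neg, Complex.zero_le_real] at h2
    have hβ0 : β = 0 := by
      have h3 := Complex.normSq_nonneg β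
      have h4 : Complex.normSq β = 0 := by linarith
      exact Complex.normSq_eq_zero.mp h4
    rw [hβ] at hβ0
    exact (sub_eq_zero.mp hβ0).symm
  have habs1 : ∀ z : G, ‖f z‖ = 1 → f z * conj (f z) = 1 := by
    intro z hz
    rw [Complex.mul_conj, Complex.normSq_eq_norm_sq, hz]
    norm_num
  have hmul : ∀ x y : G, ‖f x‖ = 1 → f (x + y) = f x * f y := by
    intro x y hx
    have := key x (-y) (habs1 x hx)
    rw [sub_neg_eq_add, herm y, Complex.conj_conj] at this
    exact this
  refine ⟨{ carrier := {x | ‖f x‖ = 1},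
            zero_mem' := by simp [hf0],
            add_mem' := ?_,
            neg_mem' := ?_ }, rfl, ?_, ?_⟩
  · intro a b ha hb
    show ‖f (a + b)‖ = 1
    rw [hmul a b ha, norm_mul, ha, hb, one_mul]
  · intro a ha
    show ‖f (-a)‖ = 1
    rw [herm, Complex.norm_conj]
    exact ha
  · exact isClosed_eq (continuous_norm.comp hfcont) continuous_const
  · exact fun x hx y _ => hmul x y hx
end

section
/- Let H be a compact subgroup of ℚₚⁿ that is also open. Then H is a free ℤₚ-module of rank n, i.e., there exist ℤₚ-linearly independent elements z₁,...,zₙ ∈ ℚₚⁿ such that H = ℤₚz₁ ⊕ ⋯ ⊕ ℤₚzₙ (H is a lattice). -/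
theorem stmt9 (p : ℕ) [Fact p.Prime] (n : ℕ)
    (H : AddSubgroup (Fin n → ℚ_[p]))
    (hKc : IsCompact (H : Set (Fin n → ℚ_[p])))
    (hKo : IsOpen (H : Set (Fin n → ℚ_[p]))) :
    ∃ z : Fin n → (Fin n → ℚ_[p]), LinearIndependent ℤ_[p] z ∧
      (H : Set (Fin n → ℚ_[p])) = (Submodule.span ℤ_[p] (Set.range z) : Set (Fin n → ℚ_[p])) := by
  classical
  have hp1 : (1 : ℝ) < (p : ℝ) := by
    exact_mod_cast (Fact.out : p.Prime).one_lt
  have hp0 : (p : ℝ) ≠ 0 := by positivity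
  have hHclosed : IsClosed (H : Set (Fin n → ℚ_[p])) := hKc.isClosed
  -- H is a ℤ_[p]-submodule
  set M : Submodule ℤ_[p] (Fin n → ℚ_[p]) :=
    { carrier := H
      add_mem' := fun ha hb => H.add_mem ha hb
      zero_mem' := H.zero_mem
      smul_mem' := by
        intro c x hx
        have hcont : Continuous fun c : ℤ_[p] => c • x := by
          have h1 : Continuous fun c : ℤ_[p] => ((c : ℚ_[p]) • x) :=
            continuous_subtype_val.smul continuous_const
          have : (fun c : ℤ_[p] => c • x) = fun c : ℤ_[p] => ((c : ℚ_[p]) • x) := by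
            funext c
            rw [← PadicInt.algebraMap_apply, algebraMap_smul]
          rw [this]; exact h1
        have hclosed : IsClosed {c : ℤ_[p] | c • x ∈ (H : Set (Fin n → ℚ_[p]))} :=
          hHclosed.preimage hcont
        have hsub : Set.range (Int.cast : ℤ → ℤ_[p]) ⊆
            {c : ℤ_[p] | c • x ∈ (H : Set (Fin n → ℚ_[p]))} := by
          rintro _ ⟨m, rfl⟩
          simp only [Set.mem_setOf_eq, Int.cast_smul_eq_zsmul]
          exact H.zsmul_mem hx m
        have hdense : Dense (Set.range (Int.cast : ℤ → ℤ_[p])) :=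
          PadicInt.denseRange_intCast
        have : (Set.univ : Set ℤ_[p]) ⊆ {c : ℤ_[p] | c • x ∈ (H : Set (Fin n → ℚ_[p]))} := by
          rw [← hdense.closure_eq]
          exact hclosed.closure_subset_iff.mpr hsub
        exact this (Set.mem_univ c) } with hM
  -- bounded above: ∃ m, all x ∈ H have ‖x‖ ≤ p ^ m
  obtain ⟨C, hC⟩ := hKc.isBounded.exists_norm_le
  obtain ⟨m, hm⟩ := pow_unbounded_of_one_lt C hp1
  have hMnorm : ∀ x ∈ M, ‖x‖ ≤ (p : ℝ) ^ m := fun x hx => (hC x hx).trans hm.le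
  -- openness: small vectors are in H
  obtain ⟨ε, hε, hball⟩ := Metric.isOpen_iff.mp hKo 0 H.zero_mem
  -- the big lattice O
  set v : Fin n → (Fin n → ℚ_[p]) := fun i => Pi.single i ((p : ℚ_[p]) ^ (-(m : ℤ))) with hv
  have hpQ0 : (p : ℚ_[p]) ≠ 0 := by
    exact_mod_cast (Fact.out : p.Prime).ne_zero
  have hpQ : ((p : ℚ_[p]) ^ (-(m : ℤ))) ≠ 0 := zpow_ne_zero _ hpQ0
  have hvQ : LinearIndependent ℚ_[p] v := by
    have hb := (Pi.basisFun ℚ_[p] (Fin n)).linearIndependent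
    have keru : LinearMap.ker (((p : ℚ_[p]) ^ (-(m : ℤ))) •
        (LinearMap.id : (Fin n → ℚ_[p]) →ₗ[ℚ_[p]] (Fin n → ℚ_[p]))) = ⊥ := by
      rw [LinearMap.ker_smul _ _ hpQ, LinearMap.ker_id]
    have := hb.map' _ keru
    convert this using 1
    funext i
    funext j
    simp [hv, Pi.single_apply, Pi.basisFun_apply]
    rfl
    rfl
  have hvZ : LinearIndependent ℤ_[p] v :=
    (LinearIndependent.iff_fractionRing ℤ_[p] ℚ_[p]).mpr hvQ
  set O : Submodule ℤ_[p] (Fin n → ℚ_[p]) := Submodule.span ℤ_[p] (Set.range v) with hO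
  have hMO : M ≤ O := by
    intro x hx
    have hxn : ‖x‖ ≤ (p : ℝ) ^ m := hMnorm x hx
    have hcoord : ∀ i, ‖x i * (p : ℚ_[p]) ^ (m : ℕ)‖ ≤ 1 := by
      intro i
      rw [norm_mul, Padic.norm_p_pow]
      calc ‖x i‖ * (p : ℝ) ^ (-(m : ℤ))
          ≤ (p : ℝ) ^ (m : ℤ) * (p : ℝ) ^ (-(m : ℤ)) := by
            apply mul_le_mul_of_nonneg_right _ (by positivity)
            refine le_trans (norm_le_pi_norm x i) ?_
            rw [zpow_natCast]; exact hxn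
        _ = 1 := by rw [← zpow_add₀ hp0]; simp
    set a : Fin n → ℤ_[p] := fun i => ⟨x i * (p : ℚ_[p]) ^ (m : ℕ), hcoord i⟩ with ha
    have hxsum : x = ∑ i, a i • v i := by
      funext j
      rw [Finset.sum_apply]
      have : ∀ i, (a i • v i) j = if j = i then x i else 0 := by
        intro i
        have h0 : (a i • v i) j = (a i : ℚ_[p]) * v i j := rfl
        rw [h0, hv]
        simp only [Pi.single_apply]
        by_cases h : j = i
        · rw [if_pos h, if_pos h]
          subst h
          show x j * (p : ℚ_[p]) ^ (m : ℕ) * (p : ℚ_[p]) ^ (-(m : ℤ)) = x j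
          rw [mul_assoc, ← zpow_natCast (p : ℚ_[p]) m, ← zpow_add₀ hpQ0,
            add_neg_cancel, zpow_zero, mul_one]
        · rw [if_neg h, if_neg h, mul_zero]
      simp only [this]
      rw [Finset.sum_ite_eq (Finset.univ : Finset (Fin n)) j (fun i => x i)]
      simp
    rw [hxsum]
    exact Submodule.sum_mem _ fun i _ =>
      Submodule.smul_mem _ _ (Submodule.subset_span ⟨i, rfl⟩)
  -- basis of M
  obtain ⟨r, bN⟩ := Submodule.basisOfPidOfLE hMO (Module.Basis.span hvZ)
  set z : Fin r → (Fin n → ℚ_[p]) := fun i => (M.subtype ∘ bN) i with hz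
  have hzli : LinearIndependent ℤ_[p] z :=
    bN.linearIndependent.map' M.subtype (Submodule.ker_subtype M)
  have hzspan : Submodule.span ℤ_[p] (Set.range z) = M := by
    have : Set.range z = M.subtype '' Set.range bN := by
      rw [hz, Set.range_comp]
    rw [this, Submodule.span_image, bN.span_eq, Submodule.map_subtype_top]
  -- r = n
  have hzliQ : LinearIndependent ℚ_[p] z :=
    (LinearIndependent.iff_fractionRing ℤ_[p] ℚ_[p]).mp hzli
  have hrle : r ≤ n := by
    have := hzliQ.fintype_card_le_finrank
    simpa [Module.finrank_fintype_fun_eq_card] using this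
  have hrge : n ≤ r := by
    -- span over ℚ_[p] is everything
    obtain ⟨k, hk⟩ : ∃ k : ℕ, ((p : ℝ)⁻¹) ^ k < ε :=
      exists_pow_lt_of_lt_one hε (by rw [inv_lt_one_iff₀]; right; exact hp1)
    have hsingle : ∀ i : Fin n, Pi.single i ((p : ℚ_[p]) ^ (k : ℕ)) ∈ (H : Set (Fin n → ℚ_[p])) := by
      intro i
      apply hball
      rw [Metric.mem_ball, dist_zero_right, Pi.norm_single, Padic.norm_p_pow]
      calc (p : ℝ) ^ (-(k : ℤ)) = ((p:ℝ)⁻¹) ^ k := by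
            rw [zpow_neg, zpow_natCast, inv_pow]
        _ < ε := hk
    have htop : Submodule.span ℚ_[p] (Set.range z) = ⊤ := by
      rw [eq_top_iff]
      rw [← (Pi.basisFun ℚ_[p] (Fin n)).span_eq]
      rw [Submodule.span_le]
      rintro _ ⟨i, rfl⟩
      have h1 : Pi.single i ((p : ℚ_[p]) ^ (k : ℕ)) ∈ Submodule.span ℚ_[p] (Set.range z) := by
        apply Submodule.span_subset_span ℤ_[p] ℚ_[p]
        rw [hzspan]
        exact hsingle i
      have h2 : (Pi.basisFun ℚ_[p] (Fin n)) i
          = ((p : ℚ_[p]) ^ (k : ℕ))⁻¹ • (Pi.single i ((p : ℚ_[p]) ^ (k : ℕ)) : Fin n → ℚ_[p]) := by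
        rw [Pi.basisFun_apply]
        funext j
        simp only [Pi.smul_apply, Pi.single_apply, smul_eq_mul]
        by_cases h : j = i
        · subst h
          rw [if_pos rfl, if_pos rfl, inv_mul_cancel₀ (pow_ne_zero _ hpQ0)]
        · simp [h]
      rw [SetLike.mem_coe, h2]
      exact Submodule.smul_mem _ _ h1
    have := finrank_le_of_span_eq_top htop
    simpa [Module.finrank_fintype_fun_eq_card] using this
  obtain rfl : r = n := le_antisymm hrle hrge
  refine ⟨z, hzli, ?_⟩
  rw [hzspan]
  rfl
end
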